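/- arXiv:1211.4022 — 3 statements merged into one kernel-verified Lean document; each statement's English description precedes it below -/
import Mathlib

section
/- Let ρ be a bipartite state on ℂ^m ⊗ ℂ^n and let ρ̃ = Σ_{i,j,k,l} ρ_{(i,k),(j,l)} (E_{ij} ⊗ E_{kl}) ⊗ (E_{ij} ⊗ E_{kl}) be its two-sided pre-measurement state on (ℂ^m ⊗ ℂ^n) ⊗ (ℂ^m ⊗ ℂ^n). Then the negativity of ρ̃ across the indicated bipartite cut equals (‖ρ‖_{l1} − 1)/2, where ‖ρ‖_{l1} is the entrywise l1-norm of ρ in the computational product basis. Consequently, the two-sided negativity of quantumness, defined as the infimum over m×m unitaries U and n×n unitaries V of the negativity of the two-sided pre-measurement state of (U ⊗ V)† ρ (U ⊗ V), equals inf_{U,V} (‖(U ⊗ V)† ρ (U ⊗ V)‖_{l1} − 1)/2. -/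
open scoped Kronecker ComplexOrder
open Matrix

noncomputable def traceNorm {ι : Type*} [Fintype ι] [DecidableEq ι] (A : Matrix ι ι ℂ) : ℝ :=
  (((Matrix.posSemidef_conjTranspose_mul_self A).1.eigenvectorUnitary : Matrix ι ι ℂ) *
    Matrix.diagonal (((↑) : ℝ → ℂ) ∘ Real.sqrt ∘ (Matrix.posSemidef_conjTranspose_mul_self A).1.eigenvalues) *
    (star (Matrix.posSemidef_conjTranspose_mul_self A).1.eigenvectorUnitary : Matrix ι ι ℂ)).trace.re

noncomputable def l1Norm {ι κ : Type*} [Fintype ι] [Fintype κ] (A : Matrix ι κ ℂ) : ℝ :=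
  ∑ i, ∑ j, ‖A i j‖

def ptranspose {α β : Type*} (ρ : Matrix (α × β) (α × β) ℂ) : Matrix (α × β) (α × β) ℂ :=
  Matrix.of fun p q => ρ (p.1, q.2) (q.1, p.2)

noncomputable def negativity {α β : Type*} [Fintype α] [Fintype β] [DecidableEq α] [DecidableEq β]
    (ρ : Matrix (α × β) (α × β) ℂ) : ℝ :=
  (traceNorm (ptranspose ρ) - 1) / 2

def matUnit {ι : Type*} [DecidableEq ι] (i j : ι) : Matrix ι ι ℂ :=
  Matrix.single i j 1

noncomputable def mcs {n : ℕ} (t : Fin n → Fin n → ℂ) :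
    Matrix (Fin n × Fin n) (Fin n × Fin n) ℂ :=
  ∑ i, ∑ j, t i j • (matUnit i j ⊗ₖ matUnit i j)

def blockOf {m n : ℕ} (ρ : Matrix (Fin m × Fin n) (Fin m × Fin n) ℂ) (i j : Fin m) :
    Matrix (Fin n) (Fin n) ℂ :=
  Matrix.of fun k l => ρ (i, k) (j, l)

noncomputable def conjU {m n : ℕ} (U : Matrix.unitaryGroup (Fin m) ℂ)
    (ρ : Matrix (Fin m × Fin n) (Fin m × Fin n) ℂ) : Matrix (Fin m × Fin n) (Fin m × Fin n) ℂ :=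
  ((U : Matrix (Fin m) (Fin m) ℂ) ⊗ₖ (1 : Matrix (Fin n) (Fin n) ℂ))ᴴ * ρ *
    ((U : Matrix (Fin m) (Fin m) ℂ) ⊗ₖ (1 : Matrix (Fin n) (Fin n) ℂ))

noncomputable def conjUV {m n : ℕ} (U : Matrix.unitaryGroup (Fin m) ℂ)
    (V : Matrix.unitaryGroup (Fin n) ℂ)
    (ρ : Matrix (Fin m × Fin n) (Fin m × Fin n) ℂ) : Matrix (Fin m × Fin n) (Fin m × Fin n) ℂ :=
  ((U : Matrix (Fin m) (Fin m) ℂ) ⊗ₖ (V : Matrix (Fin n) (Fin n) ℂ))ᴴ * ρ *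
    ((U : Matrix (Fin m) (Fin m) ℂ) ⊗ₖ (V : Matrix (Fin n) (Fin n) ℂ))

noncomputable def QNA {m n : ℕ} (ρ : Matrix (Fin m × Fin n) (Fin m × Fin n) ℂ) : ℝ :=
  ⨅ U : Matrix.unitaryGroup (Fin m) ℂ,
    ((∑ i, ∑ j, traceNorm (blockOf (conjU U ρ) i j)) - 1) / 2

noncomputable def QNAB {m n : ℕ} (ρ : Matrix (Fin m × Fin n) (Fin m × Fin n) ℂ) : ℝ :=
  ⨅ U : Matrix.unitaryGroup (Fin m) ℂ, ⨅ V : Matrix.unitaryGroup (Fin n) ℂ,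
    (l1Norm (conjUV U V ρ) - 1) / 2

/-- The two-sided pre-measurement state
`ρ̃ = Σ_{i,j,k,l} ρ_{(i,k),(j,l)} (E_{ij} ⊗ E_{kl}) ⊗ (E_{ij} ⊗ E_{kl})`. -/
noncomputable def premeas2 {m n : ℕ} (ρ : Matrix (Fin m × Fin n) (Fin m × Fin n) ℂ) :
    Matrix ((Fin m × Fin n) × (Fin m × Fin n)) ((Fin m × Fin n) × (Fin m × Fin n)) ℂ :=
  ∑ i, ∑ j, ∑ k, ∑ l, ρ (i, k) (j, l) •
    ((matUnit i j ⊗ₖ matUnit k l) ⊗ₖ (matUnit i j ⊗ₖ matUnit k l))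

lemma premeas2_apply' {m n : ℕ} (ρ : Matrix (Fin m × Fin n) (Fin m × Fin n) ℂ)
    (a b c d : Fin m × Fin n) :
    premeas2 ρ (a, b) (c, d) = if a = b ∧ c = d then ρ a c else 0 := by
  simp only [premeas2, Matrix.sum_apply, Matrix.smul_apply, kroneckerMap_apply,
    matUnit, Matrix.single, Matrix.of_apply, smul_eq_mul]
  obtain ⟨a1, a2⟩ := a; obtain ⟨b1, b2⟩ := b; obtain ⟨c1, c2⟩ := c; obtain ⟨d1, d2⟩ := d
  simp only [Prod.mk.injEq]
  rw [Finset.sum_eq_single a1, Finset.sum_eq_single c1, Finset.sum_eq_single a2,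
    Finset.sum_eq_single c2] <;> aesop

lemma traceNorm_ptranspose_premeas2 {m n : ℕ}
    (ρ : Matrix (Fin m × Fin n) (Fin m × Fin n) ℂ) :
    traceNorm (ptranspose (premeas2 ρ)) = l1Norm ρ := by
  set M := ptranspose (premeas2 ρ) with hM
  set D : Matrix ((Fin m × Fin n) × (Fin m × Fin n)) ((Fin m × Fin n) × (Fin m × Fin n)) ℂ :=
    Matrix.diagonal (fun p => (‖ρ p.2 p.1‖ : ℂ)) with hD
  have hDpsd : D.PosSemidef := by
    rw [hD, Matrix.posSemidef_diagonal_iff]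
    intro p
    exact_mod_cast Complex.zero_le_real.mpr (norm_nonneg _)
  have hsq : D ^ 2 = Mᴴ * M := by
    rw [hD, pow_two, Matrix.diagonal_mul_diagonal]
    ext ⟨a, b⟩ ⟨c, d⟩
    rw [Matrix.mul_apply, Finset.sum_eq_single ((b, a) : (Fin m × Fin n) × (Fin m × Fin n))]
    · simp only [Matrix.conjTranspose_apply, hM, ptranspose, Matrix.of_apply, premeas2_apply',
        Matrix.diagonal_apply, Prod.mk.injEq, Pi.mul_apply]
      split_ifs with h h' h' <;> simp_all
      rw [← Complex.ofReal_mul, ← pow_two, Complex.sq_norm, Complex.normSq_eq_conj_mul_self]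
    · intro x _ hx
      simp only [Matrix.conjTranspose_apply, hM, ptranspose, Matrix.of_apply, premeas2_apply']
      rw [if_neg]
      · simp
      · rintro ⟨h1, h2⟩
        exact hx (by rw [Prod.ext_iff]; exact ⟨h1, h2.symm⟩)
    · simp
  have hsqrt : D = ((Matrix.posSemidef_conjTranspose_mul_self M).1.eigenvectorUnitary :
      Matrix _ _ ℂ) * Matrix.diagonal (((↑) : ℝ → ℂ) ∘ Real.sqrt ∘
      (Matrix.posSemidef_conjTranspose_mul_self M).1.eigenvalues) *
      (star (Matrix.posSemidef_conjTranspose_mul_self M).1.eigenvectorUnitary : Matrix _ _ ℂ) := by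
    open scoped MatrixOrder in
    have h0 : (0 : Matrix _ _ ℂ) ≤ D := hDpsd.nonneg
    have h1 : (0 : Matrix _ _ ℂ) ≤ Mᴴ * M := (Matrix.posSemidef_conjTranspose_mul_self M).nonneg
    have h2 := (Matrix.posSemidef_conjTranspose_mul_self M).1.cfc_eq Real.sqrt
    rw [Matrix.IsHermitian.cfc, Unitary.conjStarAlgAut_apply] at h2
    refine Eq.trans ?_ h2
    rw [← cfcₙ_eq_cfc (hf0 := Real.sqrt_zero), ← CFC.sqrt_eq_real_sqrt _ h1, ← hsq,
      CFC.sqrt_sq D h0]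
  rw [traceNorm, ← hsqrt, hD, Matrix.trace_diagonal]
  rw [Complex.re_sum]
  simp only [Complex.ofReal_re]
  rw [Fintype.sum_prod_type, l1Norm, Finset.sum_comm]

lemma negativity_premeas2 {m n : ℕ} (ρ : Matrix (Fin m × Fin n) (Fin m × Fin n) ℂ) :
    negativity (premeas2 ρ) = (l1Norm ρ - 1) / 2 := by
  rw [negativity, traceNorm_ptranspose_premeas2]

/-- the negativity of the two-sided pre-measurement state equals
`(‖ρ‖_{l1} − 1)/2`, and consequently the two-sided negativity of quantumness
equals the minimized `(‖(U⊗V)†ρ(U⊗V)‖_{l1} − 1)/2`. -/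
theorem stmt_2 {m n : ℕ} (ρ : Matrix (Fin m × Fin n) (Fin m × Fin n) ℂ)
    (hpos : ρ.PosSemidef) (htr : ρ.trace = 1) :
    negativity (premeas2 ρ) = (l1Norm ρ - 1) / 2 ∧
    (⨅ U : Matrix.unitaryGroup (Fin m) ℂ, ⨅ V : Matrix.unitaryGroup (Fin n) ℂ,
        negativity (premeas2 (conjUV U V ρ)))
      = ⨅ U : Matrix.unitaryGroup (Fin m) ℂ, ⨅ V : Matrix.unitaryGroup (Fin n) ℂ,
        (l1Norm (conjUV U V ρ) - 1) / 2 := by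
  exact ⟨negativity_premeas2 ρ,
    iInf_congr fun U => iInf_congr fun V => negativity_premeas2 (conjUV U V ρ)⟩
end

section
/- For every bipartite state ρ on ℂ^m ⊗ ℂ^n and all unitaries U (m×m) and V (n×n), the negativity satisfies N(ρ) ≤ (1/2)‖σ − Δ(σ)‖_{l1}, where σ = (U ⊗ V)† ρ (U ⊗ V) and Δ(σ) is the diagonal part of σ in the computational product basis. In particular N(ρ) ≤ inf_{U,V} (1/2)‖σ − Δ(σ)‖_{l1}, proving the conjecture of Khasin, Kosloff and Steinitz. -/
open scoped Kronecker ComplexOrder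
open Matrix

/-- The diagonal part of a matrix: diagonal entries kept, off-diagonal entries set to 0. -/
def diagPart {ι : Type*} [DecidableEq ι] (A : Matrix ι ι ℂ) : Matrix ι ι ℂ :=
  Matrix.of fun p q => if p = q then A p q else 0

lemma traceNorm_le_l1Norm {ι : Type*} [Fintype ι] [DecidableEq ι] (A : Matrix ι ι ℂ) :
    traceNorm A ≤ l1Norm A := by
  classical
  have hP := Matrix.posSemidef_conjTranspose_mul_self A
  set V : Matrix ι ι ℂ := (hP.1.eigenvectorUnitary : Matrix ι ι ℂ) with hVdef
  set lam : ι → ℝ := hP.1.eigenvalues with hlamdef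
  have hlam0 : ∀ k, 0 ≤ lam k := fun k => hP.eigenvalues_nonneg k
  have hVV : star V * V = 1 := mem_unitaryGroup_iff'.mp hP.1.eigenvectorUnitary.2
  have hVV' : V * star V = 1 := mem_unitaryGroup_iff.mp hP.1.eigenvectorUnitary.2
  have key : ∀ d e : ι → ℂ, (V * diagonal d * star V) * (V * diagonal e * star V)
      = V * diagonal (fun k => d k * e k) * star V := by
    intro d e
    calc (V * diagonal d * star V) * (V * diagonal e * star V)
        = V * diagonal d * (star V * V) * (diagonal e * star V) := by
          simp only [Matrix.mul_assoc]
      _ = V * (diagonal d * diagonal e) * star V := by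
          rw [hVV, Matrix.mul_one]; simp only [Matrix.mul_assoc]
      _ = V * diagonal (fun k => d k * e k) * star V := by
          rw [diagonal_mul_diagonal]
  have hspec : Aᴴ * A = V * diagonal (fun k => ((lam k : ℂ))) * star V := hP.1.spectral_theorem
  set g : ι → ℂ := fun k => if lam k = 0 then 0 else (((Real.sqrt (lam k)) : ℂ))⁻¹ with hgdef
  set W : Matrix ι ι ℂ := A * (V * diagonal g * star V) with hWdef
  have hg : star g = g := by
    funext k
    simp only [Pi.star_apply, hgdef]
    split <;> simp
  have hWH : Wᴴ = V * diagonal g * star V * Aᴴ := by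
    have hsym : (V * diagonal g * star V)ᴴ = V * diagonal g * star V := by
      rw [conjTranspose_mul, conjTranspose_mul, diagonal_conjTranspose, hg,
          ← star_eq_conjTranspose, ← star_eq_conjTranspose, star_star, ← Matrix.mul_assoc]
    rw [hWdef, conjTranspose_mul, hsym]
  have sqrt_fun : ∀ k, g k * ((lam k : ℂ)) = ((Real.sqrt (lam k) : ℂ)) := by
    intro k
    by_cases h : lam k = 0
    · simp [hgdef, h, Function.comp_apply]
    · have hs : Real.sqrt (lam k) ≠ 0 := by
        simpa using Real.sqrt_ne_zero'.mpr (lt_of_le_of_ne (hlam0 k) (Ne.symm h))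
      have hs' : ((Real.sqrt (lam k) : ℂ)) ≠ 0 := Complex.ofReal_ne_zero.mpr hs
      have hmul : Real.sqrt (lam k) * Real.sqrt (lam k) = lam k :=
        Real.mul_self_sqrt (hlam0 k)
      simp only [hgdef, if_neg h, Function.comp_apply]
      rw [inv_mul_eq_iff_eq_mul₀ hs', ← Complex.ofReal_mul, hmul]
  have hWHA : Wᴴ * A = V * diagonal (fun k => ((Real.sqrt (lam k) : ℂ))) * star V := by
    rw [hWH, Matrix.mul_assoc, hspec, key]
    rw [show (fun k => g k * ((lam k : ℂ))) = fun k => ((Real.sqrt (lam k) : ℂ)) from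
      funext sqrt_fun]
  have hWHW : Wᴴ * W = V * diagonal (fun k => if lam k = 0 then (0:ℂ) else 1) * star V := by
    have : Wᴴ * W = (V * diagonal g * star V) * ((Aᴴ * A) * (V * diagonal g * star V)) := by
      rw [hWH, hWdef]; simp only [Matrix.mul_assoc]
    rw [this, hspec, ← Matrix.mul_assoc, key, key]
    have hfun : ∀ k, g k * ((lam k : ℂ)) * g k = if lam k = 0 then (0:ℂ) else 1 := by
      intro k
      by_cases h : lam k = 0
      · simp [hgdef, h]
      · have hs : Real.sqrt (lam k) ≠ 0 := by
          simpa using Real.sqrt_ne_zero'.mpr (lt_of_le_of_ne (hlam0 k) (Ne.symm h))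
        have hs' : ((Real.sqrt (lam k) : ℂ)) ≠ 0 := Complex.ofReal_ne_zero.mpr hs
        have hgk : g k = ((Real.sqrt (lam k) : ℂ))⁻¹ := by simp only [hgdef, if_neg h]
        rw [sqrt_fun k, hgk, if_neg h]
        exact mul_inv_cancel₀ hs'
    exact congrArg (· * star V) (congrArg (V * ·) (congrArg diagonal (funext hfun)))
  -- every entry of W has absolute value ≤ 1
  have hdiagle : ∀ j, ((Wᴴ * W) j j).re ≤ 1 := by
    intro j
    have h1 : (Wᴴ * W) j j = ∑ k, (if lam k = 0 then (0:ℂ) else 1)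
        * ((Complex.normSq (V j k) : ℂ)) := by
      rw [hWHW, Matrix.mul_apply]
      refine Finset.sum_congr rfl fun k _ => ?_
      rw [Matrix.mul_diagonal, Matrix.star_apply]
      rw [show star (V j k) = (starRingEnd ℂ) (V j k) from rfl]
      rw [mul_comm (V j k) _, mul_assoc, Complex.mul_conj]
    have h3 : ∑ k, Complex.normSq (V j k) = 1 := by
      have h5 := congrArg (fun M : Matrix ι ι ℂ => M j j) hVV'
      simp only [Matrix.mul_apply, Matrix.one_apply_eq] at h5
      have h4 : ∀ k, V j k * star V k j = ((Complex.normSq (V j k)):ℂ) := by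
        intro k
        rw [Matrix.star_apply, show star (V j k) = (starRingEnd ℂ) (V j k) from rfl,
          Complex.mul_conj]
      rw [Finset.sum_congr rfl (fun k _ => h4 k)] at h5
      exact_mod_cast h5
    rw [h1]
    calc (∑ k, (if lam k = 0 then (0:ℂ) else 1) * ((Complex.normSq (V j k) : ℂ))).re
        = ∑ k, ((if lam k = 0 then (0:ℂ) else 1) * ((Complex.normSq (V j k) : ℂ))).re := by
          rw [Complex.re_sum]
      _ ≤ ∑ k, Complex.normSq (V j k) := by
          refine Finset.sum_le_sum fun k _ => ?_
          by_cases h : lam k = 0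
          · simp only [h, if_true, if_pos, zero_mul, Complex.zero_re]
            exact Complex.normSq_nonneg _
          · simp [h]
      _ = 1 := h3
  have hWentry : ∀ i j, ‖W i j‖ ≤ 1 := by
    intro i j
    have hWW : ((Wᴴ * W) j j).re = ∑ i', Complex.normSq (W i' j) := by
      have h6 : (Wᴴ * W) j j = ∑ k, ((Complex.normSq (W k j) : ℂ)) := by
        rw [Matrix.mul_apply]
        refine Finset.sum_congr rfl fun k _ => ?_
        rw [Matrix.conjTranspose_apply, mul_comm,
          show star (W k j) = (starRingEnd ℂ) (W k j) from rfl, Complex.mul_conj]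
      rw [h6, Complex.re_sum]
      simp
    have hsq : Complex.normSq (W i j) ≤ 1 := by
      calc Complex.normSq (W i j) ≤ ∑ i', Complex.normSq (W i' j) :=
            Finset.single_le_sum (f := fun i' => Complex.normSq (W i' j))
              (fun i' _ => Complex.normSq_nonneg _) (Finset.mem_univ i)
        _ = ((Wᴴ * W) j j).re := hWW.symm
        _ ≤ 1 := hdiagle j
    calc ‖W i j‖ = Real.sqrt (Complex.normSq (W i j)) := Complex.norm_def _
      _ ≤ Real.sqrt 1 := Real.sqrt_le_sqrt hsq
      _ = 1 := Real.sqrt_one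
  have ht : (Wᴴ * A).trace = ∑ j, ∑ i, (starRingEnd ℂ) (W i j) * A i j := by
    rw [Matrix.trace]
    refine Finset.sum_congr rfl fun j _ => ?_
    rw [Matrix.diag_apply, Matrix.mul_apply]
    refine Finset.sum_congr rfl fun i _ => ?_
    rw [Matrix.conjTranspose_apply]
    rfl
  have hfinal : ((Wᴴ * A).trace).re ≤ l1Norm A := by
    calc ((Wᴴ * A).trace).re ≤ ‖(Wᴴ * A).trace‖ := Complex.re_le_norm _
      _ = ‖∑ j, ∑ i, (starRingEnd ℂ) (W i j) * A i j‖ := by rw [ht]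
      _ ≤ ∑ j, ‖∑ i, (starRingEnd ℂ) (W i j) * A i j‖ := norm_sum_le _ _
      _ ≤ ∑ j, ∑ i, ‖(starRingEnd ℂ) (W i j) * A i j‖ :=
          Finset.sum_le_sum fun j _ => norm_sum_le _ _
      _ ≤ ∑ j, ∑ i, ‖A i j‖ := by
          refine Finset.sum_le_sum fun j _ => Finset.sum_le_sum fun i _ => ?_
          rw [norm_mul, Complex.norm_conj]
          calc ‖W i j‖ * ‖A i j‖
              ≤ 1 * ‖A i j‖ :=
                mul_le_mul_of_nonneg_right (hWentry i j) (norm_nonneg _)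
            _ = _ := one_mul _
      _ = l1Norm A := by rw [l1Norm]; exact Finset.sum_comm
  have hsqrt : V * diagonal (((↑) : ℝ → ℂ) ∘ Real.sqrt ∘ lam) * star V = Wᴴ * A := by
    rw [hWHA]; rfl
  show ((V * diagonal (((↑) : ℝ → ℂ) ∘ Real.sqrt ∘ lam) * star V).trace).re ≤ l1Norm A
  rw [hsqrt]
  exact hfinal

lemma traceNorm_eq_sum {ι : Type*} [Fintype ι] [DecidableEq ι] (A : Matrix ι ι ℂ) :
    traceNorm A = ∑ k, Real.sqrt ((Matrix.posSemidef_conjTranspose_mul_self A).1.eigenvalues k) := by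
  have hU := (Matrix.posSemidef_conjTranspose_mul_self A).1.eigenvectorUnitary.2
  unfold traceNorm
  rw [Matrix.trace_mul_cycle, mem_unitaryGroup_iff'.mp hU, Matrix.one_mul, Matrix.trace_diagonal,
    Complex.re_sum]
  simp

lemma traceNorm_conj_unitary {ι : Type*} [Fintype ι] [DecidableEq ι] (A X : Matrix ι ι ℂ)
    (hX : X ∈ Matrix.unitaryGroup ι ℂ) :
    traceNorm (Xᴴ * A * X) = traceNorm A := by
  have hX1 : Xᴴ * X = 1 := by
    rw [← star_eq_conjTranspose]; exact mem_unitaryGroup_iff'.mp hX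
  have hX2 : X * Xᴴ = 1 := by
    rw [← star_eq_conjTranspose]; exact mem_unitaryGroup_iff.mp hX
  have cancel : ∀ Y : Matrix ι ι ℂ, X * (Xᴴ * Y) = Y := fun Y => by
    rw [← Matrix.mul_assoc, hX2, Matrix.one_mul]
  have h1 : (Xᴴ * A * X)ᴴ * (Xᴴ * A * X) = Xᴴ * (Aᴴ * (A * X)) := by
    simp only [conjTranspose_mul, conjTranspose_conjTranspose, Matrix.mul_assoc]
    rw [cancel]
  have hev : (Matrix.posSemidef_conjTranspose_mul_self (Xᴴ * A * X)).1.eigenvalues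
      = (Matrix.posSemidef_conjTranspose_mul_self A).1.eigenvalues := by
    rw [Matrix.IsHermitian.eigenvalues_eq_eigenvalues_iff, h1, Matrix.charpoly_mul_comm]
    simp only [Matrix.mul_assoc, hX2, Matrix.mul_one]
  rw [traceNorm_eq_sum, traceNorm_eq_sum, hev]

-- auxiliary lemmas
lemma kron_conjTranspose {a b c d : Type*} (A : Matrix a b ℂ) (B : Matrix c d ℂ) :
    (A ⊗ₖ B)ᴴ = Aᴴ ⊗ₖ Bᴴ := by
  ext ⟨i, k⟩ ⟨j, l⟩
  simp [conjTranspose_apply, Matrix.kroneckerMap_apply, star_mul']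

lemma map_star_conjTranspose {a : Type*} (V : Matrix a a ℂ) :
    (V.map star)ᴴ = Vᵀ := by
  ext i j
  simp [conjTranspose_apply, Matrix.map_apply]

lemma kron_unitary_mem {α β : Type*} [Fintype α] [Fintype β] [DecidableEq α] [DecidableEq β]
    (U : Matrix α α ℂ) (V : Matrix β β ℂ) (hU : U * Uᴴ = 1) (hV : V * Vᴴ = 1) :
    U ⊗ₖ V ∈ Matrix.unitaryGroup (α × β) ℂ := by
  rw [Matrix.mem_unitaryGroup_iff, star_eq_conjTranspose, kron_conjTranspose,
    ← Matrix.mul_kronecker_mul, hU, hV, Matrix.one_kronecker_one]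

lemma map_star_mul_conjTranspose {β : Type*} [Fintype β] [DecidableEq β]
    (V : Matrix β β ℂ) (hV : V * Vᴴ = 1) : (V.map star) * (V.map star)ᴴ = 1 := by
  rw [map_star_conjTranspose]
  ext i j
  have h2 := congrArg (fun M : Matrix β β ℂ => M j i) hV
  simp only [Matrix.mul_apply, conjTranspose_apply] at h2
  simp only [Matrix.mul_apply, Matrix.transpose_apply, Matrix.map_apply]
  calc ∑ k, star (V i k) * V j k = ∑ k, V j k * star (V i k) := by
        refine Finset.sum_congr rfl fun k _ => mul_comm _ _
    _ = (1 : Matrix β β ℂ) j i := h2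
    _ = (1 : Matrix β β ℂ) i j := by simp [Matrix.one_apply, eq_comm]

section ptlemmas
variable {α β : Type*} [Fintype α] [Fintype β] [DecidableEq α] [DecidableEq β]

lemma pt_mul_right_one_kron (ρ : Matrix (α × β) (α × β) ℂ) (D : Matrix β β ℂ) :
    ptranspose (ρ * ((1 : Matrix α α ℂ) ⊗ₖ D))
      = ((1 : Matrix α α ℂ) ⊗ₖ Dᵀ) * ptranspose ρ := by
  ext ⟨i, k⟩ ⟨j, l⟩
  simp only [ptranspose, Matrix.mul_apply, Matrix.of_apply, Matrix.kroneckerMap_apply,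
    Fintype.sum_prod_type, Matrix.one_apply, Matrix.transpose_apply]
  simp [Finset.sum_ite_eq', ite_mul, mul_comm]

lemma pt_mul_left_one_kron (ρ : Matrix (α × β) (α × β) ℂ) (B : Matrix β β ℂ) :
    ptranspose (((1 : Matrix α α ℂ) ⊗ₖ B) * ρ)
      = ptranspose ρ * ((1 : Matrix α α ℂ) ⊗ₖ Bᵀ) := by
  ext ⟨i, k⟩ ⟨j, l⟩
  simp only [ptranspose, Matrix.mul_apply, Matrix.of_apply, Matrix.kroneckerMap_apply,
    Fintype.sum_prod_type, Matrix.one_apply, Matrix.transpose_apply]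
  simp [Finset.sum_ite_eq', ite_mul, mul_comm]

lemma pt_mul_left_kron_one (ρ : Matrix (α × β) (α × β) ℂ) (A : Matrix α α ℂ) :
    ptranspose ((A ⊗ₖ (1 : Matrix β β ℂ)) * ρ)
      = (A ⊗ₖ (1 : Matrix β β ℂ)) * ptranspose ρ := by
  ext ⟨i, k⟩ ⟨j, l⟩
  simp only [ptranspose, Matrix.mul_apply, Matrix.of_apply, Matrix.kroneckerMap_apply,
    Fintype.sum_prod_type, Matrix.one_apply, Matrix.transpose_apply]
  simp [Finset.sum_ite_eq', mul_ite, ite_mul]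

lemma pt_mul_right_kron_one (ρ : Matrix (α × β) (α × β) ℂ) (C : Matrix α α ℂ) :
    ptranspose (ρ * (C ⊗ₖ (1 : Matrix β β ℂ)))
      = ptranspose ρ * (C ⊗ₖ (1 : Matrix β β ℂ)) := by
  ext ⟨i, k⟩ ⟨j, l⟩
  simp only [ptranspose, Matrix.mul_apply, Matrix.of_apply, Matrix.kroneckerMap_apply,
    Fintype.sum_prod_type, Matrix.one_apply, Matrix.transpose_apply]
  simp [Finset.sum_ite_eq', mul_ite, ite_mul]

lemma l1Norm_ptranspose (ρ : Matrix (α × β) (α × β) ℂ) :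
    l1Norm (ptranspose ρ) = l1Norm ρ := by
  simp only [l1Norm, ptranspose, Matrix.of_apply, Fintype.sum_prod_type]
  refine Finset.sum_congr rfl fun i _ => ?_
  rw [Finset.sum_comm]
  refine (Finset.sum_congr rfl fun j _ => Finset.sum_comm).trans ?_
  rw [Finset.sum_comm]

end ptlemmas

lemma conjTranspose_transpose_eq_map_star {a : Type*} (V : Matrix a a ℂ) :
    (Vᴴ)ᵀ = V.map star := by
  ext i j
  simp [conjTranspose_apply, Matrix.map_apply]

lemma ptranspose_conjUV {m n : ℕ} (U : Matrix.unitaryGroup (Fin m) ℂ)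
    (V : Matrix.unitaryGroup (Fin n) ℂ) (ρ : Matrix (Fin m × Fin n) (Fin m × Fin n) ℂ) :
    ptranspose (conjUV U V ρ)
      = ((U : Matrix (Fin m) (Fin m) ℂ) ⊗ₖ ((V : Matrix (Fin n) (Fin n) ℂ).map star))ᴴ *
        ptranspose ρ *
        ((U : Matrix (Fin m) (Fin m) ℂ) ⊗ₖ ((V : Matrix (Fin n) (Fin n) ℂ).map star)) := by
  set Um : Matrix (Fin m) (Fin m) ℂ := (U : Matrix (Fin m) (Fin m) ℂ) with hUm
  set Vm : Matrix (Fin n) (Fin n) ℂ := (V : Matrix (Fin n) (Fin n) ℂ) with hVm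
  have hdecomp : Um ⊗ₖ Vm
      = (Um ⊗ₖ (1 : Matrix (Fin n) (Fin n) ℂ)) * ((1 : Matrix (Fin m) (Fin m) ℂ) ⊗ₖ Vm) := by
    rw [← Matrix.mul_kronecker_mul, Matrix.mul_one, Matrix.one_mul]
  have hct : (Um ⊗ₖ Vm)ᴴ = ((1 : Matrix (Fin m) (Fin m) ℂ) ⊗ₖ Vmᴴ) *
      (Umᴴ ⊗ₖ (1 : Matrix (Fin n) (Fin n) ℂ)) := by
    rw [kron_conjTranspose, ← Matrix.mul_kronecker_mul, Matrix.mul_one, Matrix.one_mul]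
  have hre : conjUV U V ρ = ((1 : Matrix (Fin m) (Fin m) ℂ) ⊗ₖ Vmᴴ) *
      ((((Umᴴ ⊗ₖ (1 : Matrix (Fin n) (Fin n) ℂ)) * ρ) * (Um ⊗ₖ (1 : Matrix (Fin n) (Fin n) ℂ)))
        * ((1 : Matrix (Fin m) (Fin m) ℂ) ⊗ₖ Vm)) := by
    rw [conjUV, hct, hdecomp]
    simp only [Matrix.mul_assoc]
  rw [hre, pt_mul_left_one_kron, pt_mul_right_one_kron, pt_mul_right_kron_one,
    pt_mul_left_kron_one]
  rw [kron_conjTranspose, map_star_conjTranspose, conjTranspose_transpose_eq_map_star]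
  have h1 : Umᴴ ⊗ₖ Vmᵀ = ((1 : Matrix (Fin m) (Fin m) ℂ) ⊗ₖ Vmᵀ) *
      (Umᴴ ⊗ₖ (1 : Matrix (Fin n) (Fin n) ℂ)) := by
    rw [← Matrix.mul_kronecker_mul, Matrix.mul_one, Matrix.one_mul]
  have h2 : Um ⊗ₖ (Vm.map star) = (Um ⊗ₖ (1 : Matrix (Fin n) (Fin n) ℂ)) *
      ((1 : Matrix (Fin m) (Fin m) ℂ) ⊗ₖ (Vm.map star)) := by
    rw [← Matrix.mul_kronecker_mul, Matrix.mul_one, Matrix.one_mul]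
  rw [h1, h2]
  simp only [Matrix.mul_assoc]

lemma l1Norm_split {ι : Type*} [Fintype ι] [DecidableEq ι] (σ : Matrix ι ι ℂ) :
    l1Norm σ = l1Norm (σ - diagPart σ) + ∑ p, ‖σ p p‖ := by
  calc (∑ i, ∑ j, ‖σ i j‖)
      = ∑ i, ∑ j, (‖(σ - diagPart σ) i j‖ + ‖diagPart σ i j‖) := by
        refine Finset.sum_congr rfl fun i _ => Finset.sum_congr rfl fun j _ => ?_
        by_cases h : i = j
        · subst h
          simp [diagPart, Matrix.sub_apply]
        · simp [diagPart, h, Matrix.sub_apply]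
    _ = (∑ i, ∑ j, ‖(σ - diagPart σ) i j‖)
        + ∑ i, ∑ j, ‖diagPart σ i j‖ := by
        rw [← Finset.sum_add_distrib]
        exact Finset.sum_congr rfl fun i _ => Finset.sum_add_distrib
    _ = l1Norm (σ - diagPart σ) + ∑ p, ‖σ p p‖ := by
        rw [l1Norm]
        congr 1
        refine Finset.sum_congr rfl fun i _ => ?_
        simp [diagPart, apply_ite (fun z : ℂ => ‖z‖), Finset.sum_ite_eq]

lemma sum_abs_diag {ι : Type*} [Fintype ι] [DecidableEq ι] (σ : Matrix ι ι ℂ)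
    (h : σ.PosSemidef) : ∑ p, ‖σ p p‖ = (σ.trace).re := by
  rw [Matrix.trace, Complex.re_sum]
  refine Finset.sum_congr rfl fun p _ => ?_
  have h0 : (0 : ℂ) ≤ σ p p := by
    have := h.dotProduct_mulVec_nonneg (Pi.single p 1)
    simpa [Matrix.mulVec_single, dotProduct, Pi.single_apply, Finset.sum_ite_eq] using this
  obtain ⟨hre, him⟩ := Complex.nonneg_iff.mp h0
  have : σ p p = (((σ p p).re : ℝ) : ℂ) := Complex.ext rfl him.symm
  rw [Matrix.diag_apply, this, Complex.norm_of_nonneg (by simpa using hre)]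
  simp


/-- the conjecture of Khasin, Kosloff and Steinitz: the negativity of any
bipartite state is bounded by half the entrywise l1-distance of `(U⊗V)†ρ(U⊗V)` from
its diagonal part, for all local unitaries `U, V`; in particular it is bounded by the
infimum over `U, V`. -/
theorem stmt_5 {m n : ℕ} (ρ : Matrix (Fin m × Fin n) (Fin m × Fin n) ℂ)
    (hpos : ρ.PosSemidef) (htr : ρ.trace = 1) :
    (∀ (U : Matrix.unitaryGroup (Fin m) ℂ) (V : Matrix.unitaryGroup (Fin n) ℂ),
      negativity ρ ≤ (1/2) * l1Norm (conjUV U V ρ - diagPart (conjUV U V ρ))) ∧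
    negativity ρ ≤ ⨅ U : Matrix.unitaryGroup (Fin m) ℂ, ⨅ V : Matrix.unitaryGroup (Fin n) ℂ,
      (1/2) * l1Norm (conjUV U V ρ - diagPart (conjUV U V ρ)) := by
  have main : ∀ (U : Matrix.unitaryGroup (Fin m) ℂ) (V : Matrix.unitaryGroup (Fin n) ℂ),
      negativity ρ ≤ (1/2) * l1Norm (conjUV U V ρ - diagPart (conjUV U V ρ)) := by
    intro U V
    have hUu : (U : Matrix (Fin m) (Fin m) ℂ) * (U : Matrix (Fin m) (Fin m) ℂ)ᴴ = 1 := by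
      rw [← star_eq_conjTranspose]; exact mem_unitaryGroup_iff.mp U.2
    have hVu : (V : Matrix (Fin n) (Fin n) ℂ) * (V : Matrix (Fin n) (Fin n) ℂ)ᴴ = 1 := by
      rw [← star_eq_conjTranspose]; exact mem_unitaryGroup_iff.mp V.2
    have hXmem : (U : Matrix (Fin m) (Fin m) ℂ) ⊗ₖ ((V : Matrix (Fin n) (Fin n) ℂ).map star)
        ∈ Matrix.unitaryGroup (Fin m × Fin n) ℂ :=
      kron_unitary_mem _ _ hUu (map_star_mul_conjTranspose _ hVu)
    have h1 : traceNorm (ptranspose ρ) = traceNorm (ptranspose (conjUV U V ρ)) := by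
      rw [ptranspose_conjUV]
      exact (traceNorm_conj_unitary (ptranspose ρ) _ hXmem).symm
    have h2 : traceNorm (ptranspose (conjUV U V ρ)) ≤ l1Norm (ptranspose (conjUV U V ρ)) :=
      traceNorm_le_l1Norm _
    have h3 : l1Norm (ptranspose (conjUV U V ρ)) = l1Norm (conjUV U V ρ) :=
      l1Norm_ptranspose _
    have hσps : (conjUV U V ρ).PosSemidef := hpos.conjTranspose_mul_mul_same _
    have hσtr : (conjUV U V ρ).trace = 1 := by
      have hY : ((U : Matrix (Fin m) (Fin m) ℂ) ⊗ₖ (V : Matrix (Fin n) (Fin n) ℂ)) *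
          ((U : Matrix (Fin m) (Fin m) ℂ) ⊗ₖ (V : Matrix (Fin n) (Fin n) ℂ))ᴴ = 1 := by
        rw [kron_conjTranspose, ← Matrix.mul_kronecker_mul, hUu, hVu,
          Matrix.one_kronecker_one]
      rw [conjUV, Matrix.trace_mul_cycle, hY, Matrix.one_mul, htr]
    have h4 : l1Norm (conjUV U V ρ)
        = l1Norm (conjUV U V ρ - diagPart (conjUV U V ρ)) + 1 := by
      rw [l1Norm_split, sum_abs_diag _ hσps, hσtr]
      simp
    have hchain : traceNorm (ptranspose ρ)
        ≤ l1Norm (conjUV U V ρ - diagPart (conjUV U V ρ)) + 1 := by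
      rw [h1]
      calc traceNorm (ptranspose (conjUV U V ρ))
          ≤ l1Norm (ptranspose (conjUV U V ρ)) := h2
        _ = l1Norm (conjUV U V ρ) := h3
        _ = _ := h4
    show (traceNorm (ptranspose ρ) - 1) / 2 ≤ _
    linarith
  refine ⟨main, ?_⟩
  have h1 : Nonempty (Matrix.unitaryGroup (Fin m) ℂ) := ⟨1⟩
  have h2 : Nonempty (Matrix.unitaryGroup (Fin n) ℂ) := ⟨1⟩
  exact le_ciInf fun U => le_ciInf fun V => main U V
end

section
/- Let τ = Σ_{i,j} τ_{ij} (E_{ij} ⊗ E_{ij}) be a maximally correlated state on ℂ^n ⊗ ℂ^n and let σ = Σ_i τ_{ii} (E_{ii} ⊗ E_{ii}) be its diagonal part. Then for every state ξ on ℂ^n ⊗ ℂ^n whose partial transpose ξ^Γ is positive semidefinite (i.e., every PPT state, and in particular every separable state), ‖τ − σ‖_{l1} ≤ ‖τ − ξ‖_{l1}, where the entrywise l1-norm is taken in the computational product basis. Hence σ is a closest PPT (and closest separable) state to τ in this norm. -/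
open scoped Kronecker ComplexOrder
open Matrix

/-- The diagonal part `σ = Σ_i τ_{ii} (E_{ii} ⊗ E_{ii})` of a maximally correlated state. -/
noncomputable def mcsDiag {n : ℕ} (t : Fin n → Fin n → ℂ) :
    Matrix (Fin n × Fin n) (Fin n × Fin n) ℂ :=
  ∑ i, t i i • (matUnit i i ⊗ₖ matUnit i i)

lemma psd_offdiag {ι : Type*} [Fintype ι] [DecidableEq ι] {A : Matrix ι ι ℂ}
    (hA : A.PosSemidef) {p q : ι} :
    ‖A p q‖ ≤ ((A p p).re + (A q q).re) / 2 := by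
  have hdiag : ∀ r : ι, 0 ≤ (A r r).re := by
    intro r
    have := hA.re_dotProduct_nonneg (Pi.single r 1)
    simpa [Matrix.mulVec_single, single_dotProduct, dotProduct,
      Pi.single_apply, apply_ite] using this
  rcases eq_or_ne (A p q) 0 with h0 | h0
  · rw [h0]
    simp only [norm_zero]
    have := hdiag p; have := hdiag q; linarith
  · set z := A p q with hz
    set r : ℝ := ‖z‖ with hr
    have hrpos : 0 < r := by rw [hr]; exact (norm_pos_iff.mpr h0)
    set w : ℂ := -z / r with hw
    have hherm : A q p = (starRingEnd ℂ) z := by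
      rw [hz, ← hA.1.apply p q]; simp [Matrix.conjTranspose_apply]
    have hns : z * (starRingEnd ℂ) z = (r^2 : ℝ) := by
      rw [Complex.mul_conj, Complex.normSq_eq_norm_sq, ← hr]
    have hcw : (starRingEnd ℂ) w * w = 1 := by
      rw [hw]
      have : (starRingEnd ℂ) (-z / r) = -((starRingEnd ℂ) z) / r := by
        simp [map_div₀]
      rw [this]
      field_simp
      rw [mul_comm ((starRingEnd ℂ) z) z, hns]
      push_cast; ring
    have h1 : (starRingEnd ℂ) w * z = -(r : ℂ) := by
      rw [hw]
      have : (starRingEnd ℂ) (-z / r) = -((starRingEnd ℂ) z) / r := by simp [map_div₀]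
      rw [this]
      field_simp
      rw [mul_comm ((starRingEnd ℂ) z) z, hns]
      push_cast; ring
    have h2 : (starRingEnd ℂ) z * w = -(r : ℂ) := by
      rw [hw]
      field_simp
      rw [mul_comm ((starRingEnd ℂ) z) z, hns]
      push_cast; ring
    -- the vector
    set x : ι → ℂ := Pi.single p w + Pi.single q 1 with hx
    have key := hA.re_dotProduct_nonneg x
    have hxval : star x ⬝ᵥ (A *ᵥ x) =
        (starRingEnd ℂ) w * (A p p * w) + (starRingEnd ℂ) w * A p q
        + (A q p * w + A q q) := by
      rw [hx]
      simp only [star_add, ← Pi.single_star, star_one, Matrix.mulVec_add,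
        Matrix.mulVec_single, add_dotProduct, single_dotProduct,
        Pi.add_apply, one_mul, Complex.star_def, Pi.smul_apply, Matrix.col_apply, op_smul_eq_mul]
      ring
    have e1 : (starRingEnd ℂ) w * (A p p * w) = A p p := by
      rw [mul_comm (A p p) w, ← mul_assoc, hcw, one_mul]
    rw [hxval, e1, ← hz, h1, hherm, h2] at key
    simp only [Complex.add_re, Complex.neg_re, Complex.ofReal_re, RCLike.re_to_complex] at key
    linarith

lemma mcs_apply {n : ℕ} (t : Fin n → Fin n → ℂ) (a b c d : Fin n) :
    mcs t (a, b) (c, d) = if b = a ∧ d = c then t a c else 0 := by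
  simp only [mcs, matUnit, Matrix.sum_apply, Matrix.smul_apply,
    Matrix.kroneckerMap_apply, Matrix.single, Matrix.of_apply,
    smul_eq_mul]
  simp only [mul_ite, mul_one, mul_zero, ite_and]
  rw [Finset.sum_comm]
  simp [Finset.sum_ite_eq, Finset.sum_ite_eq']
  aesop

lemma mcsDiag_apply {n : ℕ} (t : Fin n → Fin n → ℂ) (a b c d : Fin n) :
    mcsDiag t (a, b) (c, d) = if b = a ∧ d = c ∧ c = a then t a c else 0 := by
  simp only [mcsDiag, matUnit, Matrix.sum_apply, Matrix.smul_apply,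
    Matrix.kroneckerMap_apply, Matrix.single, Matrix.of_apply,
    smul_eq_mul]
  simp only [mul_ite, mul_one, mul_zero, ite_and]
  aesop


lemma collapse {n : ℕ} (f : Fin n → Fin n → ℝ) :
    (∑ a : Fin n, ∑ b : Fin n, ∑ c : Fin n, ∑ d : Fin n,
      (if b = a ∧ d = c then f a c else 0)) = ∑ a, ∑ c, f a c := by
  simp only [ite_and, Finset.sum_ite_irrel, Finset.sum_ite_eq', Finset.mem_univ, if_true,
    Finset.sum_const_zero]

lemma collapse2 {n : ℕ} (f : Fin n → Fin n → ℝ) :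
    (∑ p : Fin n × Fin n, ∑ q : Fin n × Fin n, (if p = q then f p.1 p.2 else 0))
      = ∑ i : Fin n, ∑ j : Fin n, f i j := by
  simp only [Finset.sum_ite_eq, Finset.mem_univ, if_true, Fintype.sum_prod_type]

/-- the diagonal part of a maximally correlated state is a closest
PPT state (hence a closest separable state) in the entrywise l1-norm taken in the
computational product basis. -/
theorem stmt_6 {n : ℕ} (t : Fin n → Fin n → ℂ)
    (hpos : (mcs t).PosSemidef) (htr : (mcs t).trace = 1) :
    ∀ ξ : Matrix (Fin n × Fin n) (Fin n × Fin n) ℂ,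
      ξ.PosSemidef → ξ.trace = 1 → (ptranspose ξ).PosSemidef →
      l1Norm (mcs t - mcsDiag t) ≤ l1Norm (mcs t - ξ) := by
  intro ξ hξ htrξ hppt
  set M : Matrix (Fin n × Fin n) (Fin n × Fin n) ℂ := mcs t - ξ with hM
  -- LHS evaluates to the sum of off-diagonal |t i j|
  have hLHS : l1Norm (mcs t - mcsDiag t)
      = ∑ i : Fin n, ∑ j : Fin n, (if i = j then 0 else ‖t i j‖) := by
    unfold l1Norm
    simp only [Fintype.sum_prod_type, Matrix.sub_apply, mcs_apply, mcsDiag_apply]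
    have hE : ∀ a b c d : Fin n,
        ‖(if b = a ∧ d = c then t a c else 0)
          - (if b = a ∧ d = c ∧ c = a then t a c else 0)‖
        = if b = a ∧ d = c then (if a = c then 0 else ‖t a c‖) else 0 := by
      intro a b c d
      split_ifs <;> first
        | (rename_i hx hy hz; exact absurd hy.2.2.symm hz)
        | (rw [sub_self]; simp)
        | simp_all
    simp only [hE]
    rw [collapse]
  -- A : sum of |M (i,i) (j,j)| off-diagonal, B : sum of |M (i,j) (i,j)| off-diagonal
  set A : ℝ := ∑ i : Fin n, ∑ j : Fin n,
      (if i = j then 0 else ‖M (i, i) (j, j)‖) with hA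
  set B : ℝ := ∑ i : Fin n, ∑ j : Fin n,
      (if i = j then 0 else ‖M (i, j) (i, j)‖) with hB
  have hAB : A + B ≤ l1Norm M := by
    have hFA : (∑ p : Fin n × Fin n, ∑ q : Fin n × Fin n,
        (if p.2 = p.1 ∧ q.2 = q.1 then (if p.1 = q.1 then 0 else ‖M p q‖) else 0))
        = A := by
      rw [hA]
      simp only [Fintype.sum_prod_type]
      have hE : ∀ a b c d : Fin n,
          (if b = a ∧ d = c then (if a = c then 0 else ‖M (a, b) (c, d)‖) else 0)
          = if b = a ∧ d = c then (if a = c then 0 else ‖M (a, a) (c, c)‖) else 0 := by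
        intro a b c d
        split_ifs with h h' <;> try rfl
        obtain ⟨rfl, rfl⟩ := h; rfl
      simp only [hE]
      rw [collapse]
    have hGB : (∑ p : Fin n × Fin n, ∑ q : Fin n × Fin n,
        (if p = q then (if p.1 = p.2 then 0 else ‖M p q‖) else 0)) = B := by
      rw [hB]
      have hE : ∀ p q : Fin n × Fin n,
          (if p = q then (if p.1 = p.2 then 0 else ‖M p q‖) else 0)
          = if p = q then (if p.1 = p.2 then 0 else ‖M (p.1, p.2) (p.1, p.2)‖) else 0 := by
        intro p q
        split_ifs with h h' <;> try rfl
        subst h; rfl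
      simp only [hE]
      rw [collapse2 (fun i j => if i = j then 0 else ‖M (i, j) (i, j)‖)]
    have key : ∀ p q : Fin n × Fin n,
        (if p.2 = p.1 ∧ q.2 = q.1 then (if p.1 = q.1 then 0 else ‖M p q‖) else 0)
        + (if p = q then (if p.1 = p.2 then 0 else ‖M p q‖) else 0)
        ≤ ‖M p q‖ := by
      intro p q
      split_ifs <;> simp_all [norm_nonneg]
    rw [← hFA, ← hGB]
    unfold l1Norm
    rw [← Finset.sum_add_distrib]
    apply Finset.sum_le_sum; intro p _
    rw [← Finset.sum_add_distrib]
    apply Finset.sum_le_sum; intro q _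
    exact key p q
  -- per pair bound
  have hstep : ∀ i j : Fin n,
      (if i = j then (0:ℝ) else ‖t i j‖)
      ≤ (if i = j then 0 else ‖M (i, i) (j, j)‖)
        + ((if i = j then 0 else (ξ (i, j) (i, j)).re)
          + (if j = i then 0 else (ξ (j, i) (j, i)).re)) / 2 := by
    intro i j
    rcases eq_or_ne i j with rfl | hij
    · simp
    · simp only [if_neg hij, if_neg (Ne.symm hij)]
      have hMe : M (i, i) (j, j) = t i j - ξ (i, i) (j, j) := by
        rw [hM, Matrix.sub_apply, mcs_apply]; simp
      have hpt1 : ptranspose ξ (i, j) (j, i) = ξ (i, i) (j, j) := rfl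
      have hpt2 : ptranspose ξ (i, j) (i, j) = ξ (i, j) (i, j) := rfl
      have hpt3 : ptranspose ξ (j, i) (j, i) = ξ (j, i) (j, i) := rfl
      have hne : ((i, j) : Fin n × Fin n) ≠ (j, i) := by
        simp [Prod.ext_iff]; intro h; exact absurd h hij
      have hbd := psd_offdiag hppt (p := (i, j)) (q := (j, i))
      rw [hpt1, hpt2, hpt3] at hbd
      have htri : ‖t i j‖
          ≤ ‖M (i, i) (j, j)‖ + ‖ξ (i, i) (j, j)‖ := by
        calc ‖t i j‖
            = ‖(t i j - ξ (i, i) (j, j)) + ξ (i, i) (j, j)‖ := by ring_nf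
          _ ≤ ‖t i j - ξ (i, i) (j, j)‖ + ‖ξ (i, i) (j, j)‖ :=
              norm_add_le _ _
          _ = _ := by rw [hMe]
      linarith
  -- the middle quantity is at most B
  have hmid : (∑ i : Fin n, ∑ j : Fin n, (if i = j then 0 else (ξ (i, j) (i, j)).re)) ≤ B := by
    rw [hB]
    apply Finset.sum_le_sum; intro i _
    apply Finset.sum_le_sum; intro j _
    rcases eq_or_ne i j with rfl | hij
    · simp
    · rw [if_neg hij, if_neg hij]
      have hMe : M (i, j) (i, j) = -ξ (i, j) (i, j) := by
        rw [hM, Matrix.sub_apply, mcs_apply, if_neg]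
        · ring
        · simp [Ne.symm hij]
      rw [hMe, norm_neg]
      exact Complex.re_le_norm _
  have hswap : (∑ i : Fin n, ∑ j : Fin n, (if j = i then 0 else (ξ (j, i) (j, i)).re))
      = ∑ i : Fin n, ∑ j : Fin n, (if i = j then 0 else (ξ (i, j) (i, j)).re) := by
    rw [Finset.sum_comm]
  calc l1Norm (mcs t - mcsDiag t)
      = ∑ i : Fin n, ∑ j : Fin n, (if i = j then 0 else ‖t i j‖) := hLHS
    _ ≤ ∑ i : Fin n, ∑ j : Fin n,
          ((if i = j then 0 else ‖M (i, i) (j, j)‖)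
            + ((if i = j then 0 else (ξ (i, j) (i, j)).re)
              + (if j = i then 0 else (ξ (j, i) (j, i)).re)) / 2) := by
        apply Finset.sum_le_sum; intro i _
        apply Finset.sum_le_sum; intro j _
        exact hstep i j
    _ = A + ((∑ i : Fin n, ∑ j : Fin n, (if i = j then 0 else (ξ (i, j) (i, j)).re))
            + (∑ i : Fin n, ∑ j : Fin n, (if j = i then 0 else (ξ (j, i) (j, i)).re))) / 2 := by
        rw [hA]
        simp only [Finset.sum_add_distrib, add_div, ← Finset.sum_div]
        try ring
    _ = A + (∑ i : Fin n, ∑ j : Fin n, (if i = j then 0 else (ξ (i, j) (i, j)).re)) := by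
        rw [hswap]; ring
    _ ≤ A + B := by linarith
    _ ≤ l1Norm M := hAB
end
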